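/- For every λ > 0 and all (S, U, P) ∈ ℝ³, the polynomial identity 2S·F_S(S,U,P) + 2U·F_U(S,U,P) + P·F_P(S,U,P) = ((2/√3)S + 4S² − 2U² + 2P²)·(S² + U² + P²/2 − 1/3) holds. In particular, the ellipsoid E = {(S,U,P) : S² + U² + P²/2 = 1/3} (the Bianchi I constraint surface) is invariant under the flow of the reduced vector field F. -/

import Mathlib

/-- `S`-component of the reduced vector field `F`. -/
noncomputable def FS (lam S U P : ℝ) : ℝ :=
  -1 / (3 * Real.sqrt 3) - (2 / 3) * S + S ^ 2 / Real.sqrt 3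
    + U ^ 2 / Real.sqrt 3 + P ^ 2 / (2 * Real.sqrt 3)
    + 2 * S ^ 3 - S * U ^ 2 + S * P ^ 2

/-- `U`-component of the reduced vector field `F`. -/
noncomputable def FU (lam S U P : ℝ) : ℝ :=
  U * (1 / 3 - (lam / 2) * P + 2 * S ^ 2 - U ^ 2 + P ^ 2)

/-- `P`-component of the reduced vector field `F`. -/
noncomputable def FP (lam S U P : ℝ) : ℝ :=
  -(2 / 3) * P + lam * U ^ 2 + 2 * S ^ 2 * P - U ^ 2 * P + P ^ 3


open Real Set

/-- Forward vanishing: linear ODE with continuous coefficient. -/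
lemma zero_forward {f G : ℝ → ℝ} (hG : Continuous G)
    (hf : ∀ τ, HasDerivAt f (G τ * f τ) τ) {a b : ℝ} (hab : a ≤ b)
    (ha : f a = 0) : f b = 0 := by
  obtain ⟨K, hK⟩ := (isCompact_Icc (a := a) (b := b)).exists_bound_of_continuousOn
    hG.continuousOn
  have key := norm_le_gronwallBound_of_norm_deriv_right_le
    (f := f) (f' := fun x => G x * f x) (δ := 0) (K := K) (ε := 0) (a := a) (b := b)
    (fun x _ => (hf x).continuousAt.continuousWithinAt)
    (fun x _ => (hf x).hasDerivWithinAt)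
    (by simp [ha])
    (fun x hx => by
      have := hK x (Ico_subset_Icc_self hx)
      simp only [Real.norm_eq_abs] at this ⊢
      rw [abs_mul]
      nlinarith [abs_nonneg (f x), abs_nonneg (G x)])
  have := key b ⟨hab, le_refl b⟩
  rw [gronwallBound_ε0_δ0] at this
  simpa using le_antisymm this (norm_nonneg _)

lemma zero_all {f G : ℝ → ℝ} (hG : Continuous G)
    (hf : ∀ τ, HasDerivAt f (G τ * f τ) τ) (a : ℝ)
    (ha : f a = 0) : ∀ b, f b = 0 := by
  intro b
  rcases le_total a b with h | h
  · exact zero_forward hG hf h ha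
  · -- reverse time
    have hf' : ∀ τ, HasDerivAt (fun t => f (-t)) ((-G (-τ)) * f (-τ)) τ := by
      intro τ
      have := (hf (-τ)).comp τ (hasDerivAt_neg τ)
      simpa [Function.comp_def, mul_comm, mul_left_comm, mul_assoc] using this
    have := zero_forward (G := fun t => -G (-t)) (f := fun t => f (-t))
      (by fun_prop) hf' (a := -a) (b := -b) (by linarith) (by simpa using ha)
    simpa using this

theorem ellipsoid_invariant (lam : ℝ) (hlam : 0 < lam) :
    (∀ S U P : ℝ,
      2 * S * FS lam S U P + 2 * U * FU lam S U P + P * FP lam S U P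
        = ((2 / Real.sqrt 3) * S + 4 * S ^ 2 - 2 * U ^ 2 + 2 * P ^ 2)
            * (S ^ 2 + U ^ 2 + P ^ 2 / 2 - 1 / 3)) ∧
    (∀ S U P : ℝ → ℝ,
      (∀ τ, HasDerivAt S (FS lam (S τ) (U τ) (P τ)) τ) →
      (∀ τ, HasDerivAt U (FU lam (S τ) (U τ) (P τ)) τ) →
      (∀ τ, HasDerivAt P (FP lam (S τ) (U τ) (P τ)) τ) →
      ∀ τ₀, S τ₀ ^ 2 + U τ₀ ^ 2 + P τ₀ ^ 2 / 2 = 1 / 3 →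
        ∀ τ, S τ ^ 2 + U τ ^ 2 + P τ ^ 2 / 2 = 1 / 3) := by
  have hs : Real.sqrt 3 ^ 2 = 3 := Real.sq_sqrt (by norm_num)
  have hs0 : Real.sqrt 3 ≠ 0 := by positivity
  have hident : ∀ S U P : ℝ,
      2 * S * FS lam S U P + 2 * U * FU lam S U P + P * FP lam S U P
        = ((2 / Real.sqrt 3) * S + 4 * S ^ 2 - 2 * U ^ 2 + 2 * P ^ 2)
            * (S ^ 2 + U ^ 2 + P ^ 2 / 2 - 1 / 3) := by
    intro S U P
    unfold FS FU FP
    field_simp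
    ring_nf
  refine ⟨hident, ?_⟩
  intro S U P hS hU hP τ₀ h0 τ
  set G : ℝ → ℝ := fun τ => (2 / Real.sqrt 3) * S τ + 4 * S τ ^ 2 - 2 * U τ ^ 2 + 2 * P τ ^ 2
    with hGdef
  set Q : ℝ → ℝ := fun τ => S τ ^ 2 + U τ ^ 2 + P τ ^ 2 / 2 - 1 / 3 with hQdef
  have hScont : Continuous S := by
    rw [continuous_iff_continuousAt]; exact fun x => (hS x).continuousAt
  have hUcont : Continuous U := by
    rw [continuous_iff_continuousAt]; exact fun x => (hU x).continuousAt
  have hPcont : Continuous P := by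
    rw [continuous_iff_continuousAt]; exact fun x => (hP x).continuousAt
  have hGcont : Continuous G := by fun_prop
  have hQ : ∀ t, HasDerivAt Q (G t * Q t) t := by
    intro t
    have h1 : HasDerivAt Q (2 * S t * FS lam (S t) (U t) (P t)
        + 2 * U t * FU lam (S t) (U t) (P t) + P t * FP lam (S t) (U t) (P t)) t := by
      have := ((((hS t).pow 2).add ((hU t).pow 2)).add (((hP t).pow 2).div_const 2)).sub_const
        (1/3)
      convert this using 1
      · rfl
      · rfl
      · rfl
      push_cast
      ring
    rw [hident (S t) (U t) (P t)] at h1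
    exact h1
  have hQ0 : Q τ₀ = 0 := by simp [hQdef, h0]
  have := zero_all hGcont hQ τ₀ hQ0 τ
  have : Q τ = 0 := this
  simp only [hQdef] at this
  linarith
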